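/- An nth level cylinder I_{n,β}(ε_n) is full if and only if for every β-admissible sequence ε'_m of length m ≥ 1, the concatenation ε_n ε'_m is β-admissible; moreover in this case |I_{n+m,β}(ε_n ε'_m)| = |I_{n,β}(ε_n)| · |I_{m,β}(ε'_m)|. Consequently, the concatenation of two full sequences is full. -/

import Mathlib

open MeasureTheory Set
open scoped Classical Topology BigOperators ENNReal

/-- The β-transformation `x ↦ βx (mod 1)` on `[0,1)`. -/
noncomputable def Tb (β : ℝ) : ℝ → ℝ := fun x => Int.fract (β * x)

/-- The k-th digit (0-indexed) of the β-expansion of x. -/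
noncomputable def bdigit (β : ℝ) (k : ℕ) (x : ℝ) : ℤ := ⌊β * (Tb β)^[k] x⌋

/-- The cylinder of points of `[0,1)` whose β-expansion starts with ε. -/
def cylinder (β : ℝ) (n : ℕ) (ε : Fin n → ℤ) : Set ℝ :=
  {x | x ∈ Set.Ico (0:ℝ) 1 ∧ ∀ k : Fin n, bdigit β k x = ε k}

/-- ε is β-admissible iff its cylinder is nonempty. -/
def BAdmissible (β : ℝ) (n : ℕ) (ε : Fin n → ℤ) : Prop :=
  (cylinder β n ε).Nonempty

/-- ε is full iff it is admissible and its cylinder has maximal length β^(-n). -/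
def IsFull (β : ℝ) (n : ℕ) (ε : Fin n → ℤ) : Prop :=
  BAdmissible β n ε ∧ volume (cylinder β n ε) = ENNReal.ofReal (β ^ (-(n:ℤ)))

set_option maxHeartbeats 1000000

noncomputable def Cv (β : ℝ) : ∀ n, (Fin n → ℤ) → ℝ
  | 0, _ => 0
  | n+1, ε => (ε 0 : ℝ) * β ^ n + Cv β n (fun i => ε i.succ)

lemma tb_mem (β x : ℝ) : Tb β x ∈ Set.Ico (0:ℝ) 1 :=
  ⟨Int.fract_nonneg _, Int.fract_lt_one _⟩

lemma iter_mem (β : ℝ) (n : ℕ) {x : ℝ} (hx : x ∈ Set.Ico (0:ℝ) 1) :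
    (Tb β)^[n] x ∈ Set.Ico (0:ℝ) 1 := by
  cases n with
  | zero => exact hx
  | succ n => rw [Function.iterate_succ_apply']; exact tb_mem β _

lemma bdigit_shift (β : ℝ) (k n : ℕ) (x : ℝ) :
    bdigit β k ((Tb β)^[n] x) = bdigit β (n + k) x := by
  unfold bdigit
  rw [← Function.iterate_add_apply, Nat.add_comm k n]

lemma mem_cyl_succ {β : ℝ} {n : ℕ} {ε : Fin (n+1) → ℤ} {x : ℝ} :
    x ∈ cylinder β (n+1) ε ↔
      (x ∈ Set.Ico (0:ℝ) 1 ∧ ⌊β * x⌋ = ε 0) ∧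
        Tb β x ∈ cylinder β n (fun i => ε i.succ) := by
  constructor
  · rintro ⟨hx, hd⟩
    refine ⟨⟨hx, ?_⟩, tb_mem β x, fun k => ?_⟩
    · have := hd 0
      simpa [bdigit] using this
    · have := hd k.succ
      have h2 : bdigit β (k : ℕ) (Tb β x) = bdigit β ((k : ℕ) + 1) x := by
        have := bdigit_shift β k 1 x
        simpa [Nat.add_comm] using this
      rw [h2]
      simpa [Fin.val_succ] using this
  · rintro ⟨⟨hx, h0⟩, hT, hd⟩
    refine ⟨hx, fun k => ?_⟩
    induction k using Fin.cases with
    | zero => simpa [bdigit] using h0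
    | succ i =>
      have := hd i
      have h2 : bdigit β (i : ℕ) (Tb β x) = bdigit β ((i : ℕ) + 1) x := by
        have := bdigit_shift β i 1 x
        simpa [Nat.add_comm] using this
      rw [h2] at this
      simpa [Fin.val_succ] using this

lemma tb_eq {β x : ℝ} {e : ℤ} (h : ⌊β * x⌋ = e) : Tb β x = β * x - e := by
  rw [Tb, Int.fract, h]

lemma iter_on_cyl (β : ℝ) : ∀ (n : ℕ) (ε : Fin n → ℤ) (x : ℝ), x ∈ cylinder β n ε →
    (Tb β)^[n] x = β ^ n * x - Cv β n ε := by
  intro n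
  induction n with
  | zero => intro ε x _; simp [Cv]
  | succ n ih =>
    intro ε x hx
    rw [mem_cyl_succ] at hx
    obtain ⟨⟨hx1, h0⟩, hT⟩ := hx
    rw [Function.iterate_succ_apply, ih _ _ hT, tb_eq h0, Cv]
    ring

lemma cyl_subset {β : ℝ} (hb : 0 < β) (n : ℕ) (ε : Fin n → ℤ) :
    cylinder β n ε ⊆ Set.Ico (Cv β n ε / β ^ n) ((Cv β n ε + 1) / β ^ n) := by
  intro x hx
  have hbn : (0:ℝ) < β ^ n := pow_pos hb n
  have h1 := iter_mem β n hx.1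
  rw [iter_on_cyl β n ε x hx] at h1
  obtain ⟨h2, h3⟩ := h1
  constructor
  · rw [div_le_iff₀ hbn]; nlinarith
  · rw [lt_div_iff₀ hbn]; nlinarith

lemma cyl_eq_Ico {β : ℝ} (hb : 0 < β) : ∀ (n : ℕ) (ε : Fin n → ℤ),
    ∃ a b : ℝ, cylinder β n ε = Set.Ico a b := by
  intro n
  induction n with
  | zero =>
    intro ε
    exact ⟨0, 1, by ext x; simp [_root_.cylinder, Set.mem_Ico]⟩
  | succ n ih =>
    intro ε
    obtain ⟨a, b, heq⟩ := ih (fun i => ε i.succ)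
    refine ⟨max (max 0 ((ε 0 : ℝ)/β)) ((a + ε 0)/β),
            min (min 1 (((ε 0 : ℝ)+1)/β)) ((b + ε 0)/β), ?_⟩
    ext x
    rw [mem_cyl_succ, heq]
    simp only [Set.mem_Ico, max_le_iff, lt_min_iff]
    constructor
    · rintro ⟨⟨⟨hx0, hx1⟩, h0⟩, hT1, hT2⟩
      have hf1 : (ε 0 : ℝ) ≤ β * x := by rw [← h0]; exact Int.floor_le _
      have hf2 : β * x < (ε 0 : ℝ) + 1 := by rw [← h0]; exact Int.lt_floor_add_one _
      rw [tb_eq h0] at hT1 hT2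
      refine ⟨⟨⟨hx0, by rw [div_le_iff₀ hb]; nlinarith⟩, by rw [div_le_iff₀ hb]; nlinarith⟩,
        ⟨hx1, by rw [lt_div_iff₀ hb]; nlinarith⟩, by rw [lt_div_iff₀ hb]; nlinarith⟩
    · rintro ⟨⟨⟨hx0, hx1⟩, hx2⟩, ⟨hx3, hx4⟩, hx5⟩
      rw [div_le_iff₀ hb] at hx1 hx2
      rw [lt_div_iff₀ hb] at hx4 hx5
      have h0 : ⌊β * x⌋ = ε 0 := by
        rw [Int.floor_eq_iff]; constructor <;> [nlinarith; nlinarith]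
      refine ⟨⟨⟨hx0, hx3⟩, h0⟩, ?_, ?_⟩
      · rw [tb_eq h0]; nlinarith
      · rw [tb_eq h0]; nlinarith

lemma mem_cyl_append {β : ℝ} {n m : ℕ} {ε : Fin n → ℤ} {ε' : Fin m → ℤ} {x : ℝ} :
    x ∈ cylinder β (n+m) (Fin.append ε ε') ↔
      x ∈ cylinder β n ε ∧ (Tb β)^[n] x ∈ cylinder β m ε' := by
  constructor
  · rintro ⟨hx, hd⟩
    refine ⟨⟨hx, fun k => ?_⟩, iter_mem β n hx, fun k => ?_⟩
    · have := hd (k.castAdd m)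
      simpa [Fin.append_left] using this
    · have := hd (k.natAdd n)
      rw [bdigit_shift]
      simpa [Fin.append_right] using this
  · rintro ⟨⟨hx, hd1⟩, _, hd2⟩
    refine ⟨hx, fun k => ?_⟩
    refine Fin.addCases (motive := fun k => bdigit β (k : ℕ) x = Fin.append ε ε' k)
      (fun i => ?_) (fun i => ?_) k
    · simpa [Fin.append_left] using hd1 i
    · have := hd2 i
      rw [bdigit_shift] at this
      simpa [Fin.append_right] using this

lemma zpow_neg_nat {β : ℝ} (n : ℕ) : β ^ (-(n:ℤ)) = (β ^ n)⁻¹ := by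
  rw [zpow_neg, zpow_natCast]

lemma full_cyl_eq {β : ℝ} (hβ : 1 < β) {n : ℕ} {ε : Fin n → ℤ} (hfull : IsFull β n ε) :
    cylinder β n ε = Set.Ico (Cv β n ε / β ^ n) ((Cv β n ε + 1) / β ^ n) := by
  have hb : (0:ℝ) < β := lt_trans one_pos hβ
  have hbn : (0:ℝ) < β ^ n := pow_pos hb n
  obtain ⟨a, b, heq⟩ := cyl_eq_Ico hb n ε
  have hab : a < b := Set.nonempty_Ico.mp (heq ▸ hfull.1)
  have hsub := heq ▸ cyl_subset hb n ε
  obtain ⟨c1, c2⟩ := (Set.Ico_subset_Ico_iff hab).mp hsub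
  have hvol := hfull.2
  rw [heq, Real.volume_Ico, zpow_neg_nat] at hvol
  have hba : b - a = (β ^ n)⁻¹ := by
    rw [ENNReal.ofReal_eq_ofReal_iff (by linarith) (by positivity)] at hvol
    exact hvol
  have hd : (Cv β n ε + 1) / β ^ n - Cv β n ε / β ^ n = (β ^ n)⁻¹ := by
    field_simp
    ring
  have ha : a = Cv β n ε / β ^ n := by linarith
  have hb' : b = (Cv β n ε + 1) / β ^ n := by linarith
  rw [heq, ha, hb']

lemma append_eq {β : ℝ} (hβ : 1 < β) {n : ℕ} {ε : Fin n → ℤ} (hfull : IsFull β n ε)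
    {m : ℕ} {ε' : Fin m → ℤ} {a' b' : ℝ} (heq' : cylinder β m ε' = Set.Ico a' b')
    (hab : a' < b') :
    cylinder β (n+m) (Fin.append ε ε') =
      Set.Ico ((a' + Cv β n ε) / β ^ n) ((b' + Cv β n ε) / β ^ n) := by
  have hb : (0:ℝ) < β := lt_trans one_pos hβ
  have hbn : (0:ℝ) < β ^ n := pow_pos hb n
  have hsub : Set.Ico a' b' ⊆ Set.Ico (0:ℝ) 1 := heq' ▸ fun x hx => hx.1
  obtain ⟨ha0, hb1⟩ := (Set.Ico_subset_Ico_iff hab).mp hsub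
  have hc := full_cyl_eq hβ hfull
  ext x
  rw [mem_cyl_append, heq']
  constructor
  · rintro ⟨h1, h2⟩
    have hT := iter_on_cyl β n ε x h1
    rw [hT] at h2
    obtain ⟨h3, h4⟩ := h2
    constructor
    · rw [div_le_iff₀ hbn]; nlinarith
    · rw [lt_div_iff₀ hbn]; nlinarith
  · rintro ⟨h1, h2⟩
    rw [div_le_iff₀ hbn] at h1
    rw [lt_div_iff₀ hbn] at h2
    have hx1 : x ∈ cylinder β n ε := by
      rw [hc]
      constructor
      · rw [div_le_iff₀ hbn]; nlinarith
      · rw [lt_div_iff₀ hbn]; nlinarith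
    refine ⟨hx1, ?_⟩
    rw [iter_on_cyl β n ε x hx1]
    constructor <;> nlinarith

/-- A cylinder is full iff all concatenations with admissible words are admissible;
moreover lengths multiply, and concatenations of full words are full. -/
theorem stmt3 (β : ℝ) (hβ : 1 < β) (n : ℕ) (ε : Fin n → ℤ) (hε : BAdmissible β n ε) :
    (IsFull β n ε ↔ ∀ m : ℕ, 1 ≤ m → ∀ ε' : Fin m → ℤ, BAdmissible β m ε' →
      BAdmissible β (n + m) (Fin.append ε ε')) ∧
    (IsFull β n ε → ∀ m : ℕ, 1 ≤ m → ∀ ε' : Fin m → ℤ, BAdmissible β m ε' →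
      volume (cylinder β (n + m) (Fin.append ε ε')) =
        volume (cylinder β n ε) * volume (cylinder β m ε')) ∧
    (IsFull β n ε → ∀ m : ℕ, ∀ ε' : Fin m → ℤ, IsFull β m ε' →
      IsFull β (n + m) (Fin.append ε ε')) := by
  have hb : (0:ℝ) < β := lt_trans one_pos hβ
  have hbn : (0:ℝ) < β ^ n := pow_pos hb n
  -- forward direction of iff
  have fwd : IsFull β n ε → ∀ m : ℕ, ∀ ε' : Fin m → ℤ, BAdmissible β m ε' →
      BAdmissible β (n + m) (Fin.append ε ε') := by
    intro hfull m ε' hε'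
    obtain ⟨a', b', heq'⟩ := cyl_eq_Ico hb m ε'
    have hab' : a' < b' := Set.nonempty_Ico.mp (heq' ▸ hε')
    rw [BAdmissible, append_eq hβ hfull heq' hab', Set.nonempty_Ico]
    rw [div_lt_div_iff₀ hbn hbn]
    nlinarith
  have bwd : (∀ m : ℕ, 1 ≤ m → ∀ ε' : Fin m → ℤ, BAdmissible β m ε' →
      BAdmissible β (n + m) (Fin.append ε ε')) → IsFull β n ε := by
    intro H
    refine ⟨hε, ?_⟩
    obtain ⟨a, b, heq⟩ := cyl_eq_Ico hb n ε
    have hab : a < b := Set.nonempty_Ico.mp (heq ▸ hε)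
    have hsub := heq ▸ cyl_subset hb n ε
    obtain ⟨c1, c2⟩ := (Set.Ico_subset_Ico_iff hab).mp hsub
    rw [div_le_iff₀ hbn] at c1
    have c2' : b * β ^ n ≤ Cv β n ε + 1 := (le_div_iff₀ hbn).mp c2
    set A := β ^ n * a - Cv β n ε with hA
    set B := β ^ n * b - Cv β n ε with hB
    have hA0 : 0 ≤ A := by nlinarith
    have hB1 : B ≤ 1 := by nlinarith
    have hABlt : A < B := by nlinarith
    -- helper: every point of [0,1) is approximated by images of cylinder points
    have exists_w : ∀ y ∈ Set.Ico (0:ℝ) 1, ∀ M : ℕ, 1 ≤ M →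
        ∃ w : ℝ, A ≤ w ∧ w < B ∧ |w - y| < (β ^ M)⁻¹ := by
      intro y hy M hM1
      have hbM : (0:ℝ) < β ^ M := pow_pos hb M
      have hyc : y ∈ cylinder β M (fun k => bdigit β k y) := ⟨hy, fun _ => rfl⟩
      obtain ⟨z, hz⟩ := H M hM1 (fun k => bdigit β k y) ⟨y, hyc⟩
      rw [mem_cyl_append] at hz
      obtain ⟨hz1, hz2⟩ := hz
      have hT := iter_on_cyl β n ε z hz1
      rw [heq] at hz1
      refine ⟨(Tb β)^[n] z, ?_, ?_, ?_⟩
      · rw [hT]; obtain ⟨h1, h2⟩ := hz1; nlinarith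
      · rw [hT]; obtain ⟨h1, h2⟩ := hz1; nlinarith
      · have d1 := cyl_subset hb M (fun k => bdigit β k y) hz2
        have d2 := cyl_subset hb M (fun k => bdigit β k y) hyc
        obtain ⟨d11, d12⟩ := d1
        obtain ⟨d21, d22⟩ := d2
        have hd : (Cv β M (fun k => bdigit β k y) + 1) / β ^ M -
            Cv β M (fun k => bdigit β k y) / β ^ M = (β ^ M)⁻¹ := by field_simp; ring
        rw [abs_sub_lt_iff]
        constructor <;> linarith
    have key : b - a = (β ^ n)⁻¹ := by
      have hle : b - a ≤ (β ^ n)⁻¹ := by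
        rw [inv_eq_one_div, le_div_iff₀ hbn]; nlinarith
      rcases lt_or_eq_of_le hle with hlt | heqv
      · exfalso
        have hBA : B - A < 1 := by
          have h2 : (b - a) * β ^ n < 1 := by
            rw [inv_eq_one_div, lt_div_iff₀ hbn] at hlt; exact hlt
          nlinarith
        by_cases hc : B < 1
        · -- escape above B
          obtain ⟨M0, hM0⟩ := pow_unbounded_of_one_lt (2 / (1 - B)) hβ
          set M := M0 + 1 with hMdef
          have hMle : β ^ M0 ≤ β ^ M := pow_le_pow_right₀ hβ.le (Nat.le_succ _)
          have hM : 2 / (1 - B) < β ^ M := lt_of_lt_of_le hM0 hMle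
          have hbM : (0:ℝ) < β ^ M := pow_pos hb M
          have h1B : (0:ℝ) < 1 - B := by linarith
          have hM2 : 2 < β ^ M * (1 - B) := by
            rw [div_lt_iff₀ h1B] at hM; nlinarith
          have hinv : (β ^ M)⁻¹ < (1 - B) / 2 := by
            rw [inv_eq_one_div, div_lt_div_iff₀ hbM two_pos]; nlinarith
          obtain ⟨w, hw1, hw2, hw3⟩ := exists_w ((B + 1) / 2)
            ⟨by linarith, by linarith⟩ M (Nat.le_add_left 1 M0)
          rw [abs_sub_lt_iff] at hw3
          obtain ⟨_, hw5⟩ := hw3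
          linarith
        · -- escape below A
          push_neg at hc
          have hApos : 0 < A := by linarith
          obtain ⟨M0, hM0⟩ := pow_unbounded_of_one_lt (2 / A) hβ
          set M := M0 + 1 with hMdef
          have hMle : β ^ M0 ≤ β ^ M := pow_le_pow_right₀ hβ.le (Nat.le_succ _)
          have hM : 2 / A < β ^ M := lt_of_lt_of_le hM0 hMle
          have hbM : (0:ℝ) < β ^ M := pow_pos hb M
          have hM2 : 2 < β ^ M * A := by
            rw [div_lt_iff₀ hApos] at hM; nlinarith
          have hinv : (β ^ M)⁻¹ < A / 2 := by
            rw [inv_eq_one_div, div_lt_div_iff₀ hbM two_pos]; nlinarith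
          obtain ⟨w, hw1, hw2, hw3⟩ := exists_w (A / 2)
            ⟨by linarith, by linarith⟩ M (Nat.le_add_left 1 M0)
          rw [abs_sub_lt_iff] at hw3
          obtain ⟨hw4, _⟩ := hw3
          linarith
      · exact heqv
    rw [heq, Real.volume_Ico, key, zpow_neg_nat]
  refine ⟨⟨fun h m _ ε' hε' => fwd h m ε' hε', bwd⟩, ?_, ?_⟩
  · -- volumes multiply
    intro hfull m _ ε' hε'
    obtain ⟨a', b', heq'⟩ := cyl_eq_Ico hb m ε'
    have hab' : a' < b' := Set.nonempty_Ico.mp (heq' ▸ hε')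
    rw [append_eq hβ hfull heq' hab', heq', Real.volume_Ico, Real.volume_Ico,
      hfull.2, zpow_neg_nat, ← ENNReal.ofReal_mul (by positivity)]
    congr 1
    field_simp
    ring
  · -- full ∘ full is full
    intro hfull m ε' hf'
    have hbm : (0:ℝ) < β ^ m := pow_pos hb m
    have heq' := full_cyl_eq hβ hf'
    have hab' : Cv β m ε' / β ^ m < (Cv β m ε' + 1) / β ^ m := by
      rw [div_lt_div_iff₀ hbm hbm]; nlinarith
    have hA := append_eq hβ hfull heq' hab'
    constructor
    · rw [BAdmissible, hA, Set.nonempty_Ico, div_lt_div_iff₀ hbn hbn]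
      nlinarith
    · rw [hA, Real.volume_Ico, zpow_neg_nat]
      congr 1
      rw [pow_add]
      field_simp
      ring
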